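/- arXiv:1604.08403 — 3 statements merged into one kernel-verified Lean document; each statement's English description precedes it below -/
import Mathlib

section
/- Let T = [0,1] with Lebesgue measure λ, let (Θ, 𝒜, π) be a probability space, let θ ↦ S_θ assign to each θ ∈ Θ a measurable subset of [0,1] such that (t,θ) ↦ 𝟙{t ∈ S_θ} is jointly measurable, let α(t) = ∫_Θ 𝟙{t ∈ S_θ} dπ(θ), and for γ ∈ [0,1] let L_γ(S, S') = γ·λ(S \ S') + (1−γ)·λ(S' \ S). Then the level set S* = {t ∈ [0,1] : α(t) ≥ γ} minimizes the expected loss: for every measurable set S ⊆ [0,1], ∫_Θ L_γ(S*, S_θ) dπ(θ) ≤ ∫_Θ L_γ(S, S_θ) dπ(θ). -/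
open MeasureTheory
open scoped ENNReal

/-- Lebesgue measure on `[0,1]`, as the restriction of `volume` to `Set.Icc 0 1`. -/
noncomputable def lam : Measure ℝ := volume.restrict (Set.Icc (0:ℝ) 1)

/-- The loss `L_γ(S, S') = γ·λ(S \ S') + (1−γ)·λ(S' \ S)`. -/
noncomputable def Lloss (γ : ℝ) (S S' : Set ℝ) : ℝ :=
  γ * (lam (S \ S')).toReal + (1 - γ) * (lam (S' \ S)).toReal

/-- `α(t) = ∫_Θ 𝟙{t ∈ S_θ} dπ(θ)`. -/
noncomputable def alphaFn {Θ : Type*} [MeasurableSpace Θ] (π : Measure Θ)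
    (S : Θ → Set ℝ) (t : ℝ) : ℝ :=
  ∫ θ, Set.indicator (S θ) (fun _ => (1:ℝ)) t ∂π

instance : IsProbabilityMeasure lam := by
  constructor
  rw [lam, Measure.restrict_apply_univ, Real.volume_Icc]
  norm_num

lemma integrable_of_bound_one {X : Type*} [MeasurableSpace X] (μ : Measure X)
    [IsFiniteMeasure μ] (f : X → ℝ) (hf : Measurable f) (h : ∀ x, ‖f x‖ ≤ 1) :
    Integrable f μ :=
  (integrable_const (1:ℝ)).mono' hf.aestronglyMeasurable (Filter.Eventually.of_forall h)

lemma alphaFn_eq {Θ : Type*} [MeasurableSpace Θ] (π : Measure Θ)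
    (S : Θ → Set ℝ) (hjoint : MeasurableSet {p : ℝ × Θ | p.1 ∈ S p.2}) (t : ℝ) :
    alphaFn π S t = (π {θ | t ∈ S θ}).toReal := by
  have hA : MeasurableSet {θ | t ∈ S θ} := by
    have : {θ | t ∈ S θ} = Prod.mk t ⁻¹' {p : ℝ × Θ | p.1 ∈ S p.2} := rfl
    rw [this]
    exact hjoint.preimage measurable_prodMk_left
  have : (fun θ => Set.indicator (S θ) (fun _ => (1:ℝ)) t)
      = Set.indicator {θ | t ∈ S θ} (fun _ => (1:ℝ)) := by
    funext θ
    by_cases h : t ∈ S θ <;> simp [Set.indicator, h]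
  rw [alphaFn, this]
  exact integral_indicator_one hA

theorem stmt_0 {Θ : Type*} [MeasurableSpace Θ] (π : Measure Θ) [IsProbabilityMeasure π]
    (S : Θ → Set ℝ) (hsub : ∀ θ, S θ ⊆ Set.Icc 0 1) (hmeas : ∀ θ, MeasurableSet (S θ))
    (hjoint : MeasurableSet {p : ℝ × Θ | p.1 ∈ S p.2})
    (γ : ℝ) (hγ : γ ∈ Set.Icc (0:ℝ) 1) :
    ∀ T : Set ℝ, MeasurableSet T → T ⊆ Set.Icc 0 1 →
      ∫ θ, Lloss γ {t ∈ Set.Icc (0:ℝ) 1 | γ ≤ alphaFn π S t} (S θ) ∂π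
        ≤ ∫ θ, Lloss γ T (S θ) ∂π := by
  intro T hTm hTsub
  set Z : Set (ℝ × Θ) := {p : ℝ × Θ | p.1 ∈ S p.2} with hZdef
  -- basic facts about α
  have hAm : ∀ t : ℝ, MeasurableSet {θ | t ∈ S θ} := fun t =>
    hjoint.preimage measurable_prodMk_left
  have hπAmeas : Measurable fun t : ℝ => π {θ | t ∈ S θ} := by
    have := measurable_measure_prodMk_left (ν := π) hjoint
    exact this
  have hαmeas : Measurable (alphaFn π S) := by
    have : alphaFn π S = fun t => (π {θ | t ∈ S θ}).toReal := by
      funext t; exact alphaFn_eq π S hjoint t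
    rw [this]
    exact hπAmeas.ennreal_toReal
  have hα01 : ∀ t, 0 ≤ alphaFn π S t ∧ alphaFn π S t ≤ 1 := by
    intro t
    rw [alphaFn_eq π S hjoint t]
    constructor
    · exact ENNReal.toReal_nonneg
    · have := prob_le_one (μ := π) (s := {θ | t ∈ S θ})
      calc (π {θ | t ∈ S θ}).toReal ≤ (1 : ℝ≥0∞).toReal :=
            ENNReal.toReal_mono (by norm_num) this
        _ = 1 := by norm_num
  -- the level set
  set Tstar : Set ℝ := {t ∈ Set.Icc (0:ℝ) 1 | γ ≤ alphaFn π S t} with hTstar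
  have hTstarm : MeasurableSet Tstar :=
    measurableSet_Icc.inter (measurableSet_le measurable_const hαmeas)
  have hTstarsub : Tstar ⊆ Set.Icc (0:ℝ) 1 := fun t ht => ht.1
  -- B = ∫ θ, (lam (S θ)).toReal
  set B : ℝ := ∫ θ, (lam (S θ)).toReal ∂π with hB
  -- the key formula
  have key : ∀ U : Set ℝ, MeasurableSet U →
      ∫ θ, Lloss γ U (S θ) ∂π
        = γ * (lam U).toReal + (1 - γ) * B - ∫ t in U, alphaFn π S t ∂lam := by
    intro U hUm
    -- measurability of θ ↦ lam (U ∩ S θ)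
    set ZU : Set (ℝ × Θ) := {p : ℝ × Θ | p.1 ∈ U} ∩ Z with hZU
    have hZUm : MeasurableSet ZU :=
      ((hUm.preimage measurable_fst).inter hjoint)
    have hMeq : (fun θ => lam (U ∩ S θ))
        = fun θ => lam ((fun t => (t, θ)) ⁻¹' ZU) := rfl
    have hM : Measurable fun θ => lam (U ∩ S θ) := by
      rw [hMeq]
      exact measurable_measure_prodMk_right hZUm
    have hMfin : ∀ θ, lam (U ∩ S θ) ≠ ⊤ := fun θ => (measure_lt_top lam _).ne
    have hMtoReal_le : ∀ (V : Set ℝ), ‖(lam V).toReal‖ ≤ 1 := by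
      intro V
      rw [Real.norm_eq_abs, abs_of_nonneg ENNReal.toReal_nonneg]
      calc (lam V).toReal ≤ (lam Set.univ).toReal :=
            ENNReal.toReal_mono (measure_ne_top _ _) (measure_mono (Set.subset_univ _))
        _ = 1 := by simp
    have hintM : Integrable (fun θ => (lam (U ∩ S θ)).toReal) π :=
      integrable_of_bound_one π _ hM.ennreal_toReal (fun θ => hMtoReal_le _)
    have hSmeasθ : Measurable fun θ => lam (S θ) := by
      have : (fun θ => lam (S θ)) = fun θ => lam ((fun t => (t, θ)) ⁻¹' Z) := by
        funext θ; rfl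
      rw [this]
      exact measurable_measure_prodMk_right hjoint
    have hintS : Integrable (fun θ => (lam (S θ)).toReal) π :=
      integrable_of_bound_one π _ hSmeasθ.ennreal_toReal (fun θ => hMtoReal_le _)
    -- pointwise formula for the loss
    have hpt : ∀ θ, Lloss γ U (S θ)
        = γ * (lam U).toReal + (1 - γ) * (lam (S θ)).toReal
          - (lam (U ∩ S θ)).toReal := by
      intro θ
      have h1 : lam (U \ S θ) = lam U - lam (U ∩ S θ) := by
        rw [show U \ S θ = U \ (U ∩ S θ) from Set.diff_self_inter.symm]
        exact measure_diff Set.inter_subset_left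
          ((hUm.inter (hmeas θ)).nullMeasurableSet) (hMfin θ)
      have h2 : lam (S θ \ U) = lam (S θ) - lam (U ∩ S θ) := by
        rw [show S θ \ U = S θ \ (U ∩ S θ) from Set.diff_inter_self_eq_diff.symm]
        exact measure_diff Set.inter_subset_right
          ((hUm.inter (hmeas θ)).nullMeasurableSet) (hMfin θ)
      rw [Lloss, h1, h2,
        ENNReal.toReal_sub_of_le (measure_mono Set.inter_subset_left) (measure_ne_top _ _),
        ENNReal.toReal_sub_of_le (measure_mono Set.inter_subset_right) (measure_ne_top _ _)]
      ring
    -- integrate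
    have hsplit : ∫ θ, Lloss γ U (S θ) ∂π
        = γ * (lam U).toReal + (1 - γ) * B - ∫ θ, (lam (U ∩ S θ)).toReal ∂π := by
      have : ∫ θ, Lloss γ U (S θ) ∂π
          = ∫ θ, (γ * (lam U).toReal + (1 - γ) * (lam (S θ)).toReal
              - (lam (U ∩ S θ)).toReal) ∂π := by
        exact integral_congr_ae (Filter.Eventually.of_forall hpt)
      rw [this, integral_sub (by
        exact (integrable_const _).add (hintS.const_mul _)) hintM,
        integral_add (integrable_const _) (hintS.const_mul _),
        integral_const]
      simp only [measure_univ, probReal_univ, ENNReal.toReal_one, one_smul, ← hB,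
        MeasureTheory.integral_const_mul]
    rw [hsplit]
    -- Fubini: ∫ θ, (lam (U ∩ S θ)).toReal = ∫ t in U, α t
    have hfub : ∫ θ, (lam (U ∩ S θ)).toReal ∂π = ∫ t in U, alphaFn π S t ∂lam := by
      have hLHS : ∫ θ, (lam (U ∩ S θ)).toReal ∂π
          = (∫⁻ θ, lam (U ∩ S θ) ∂π).toReal := by
        exact integral_toReal hM.aemeasurable
          (Filter.Eventually.of_forall fun θ => measure_lt_top _ _)
      -- swap
      have hindm : AEMeasurable (Function.uncurry fun (θ : Θ) (t : ℝ) =>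
          ZU.indicator (fun _ => (1:ℝ≥0∞)) (t, θ)) (π.prod lam) := by
        have : (Function.uncurry fun (θ : Θ) (t : ℝ) =>
            ZU.indicator (fun _ => (1:ℝ≥0∞)) (t, θ))
            = (Prod.swap ⁻¹' ZU).indicator (fun _ => (1:ℝ≥0∞)) := by
          funext p
          rcases p with ⟨θ, t⟩
          rfl
        rw [this]
        exact ((measurable_const.indicator
          (hZUm.preimage measurable_swap))).aemeasurable
      have hswap : ∫⁻ θ, lam (U ∩ S θ) ∂π
          = ∫⁻ t, ∫⁻ θ, ZU.indicator (fun _ => (1:ℝ≥0∞)) (t, θ) ∂π ∂lam := by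
        have h1 : ∀ θ, lam (U ∩ S θ)
            = ∫⁻ t, ZU.indicator (fun _ => (1:ℝ≥0∞)) (t, θ) ∂lam := by
          intro θ
          have : (fun t => ZU.indicator (fun _ => (1:ℝ≥0∞)) (t, θ))
              = (U ∩ S θ).indicator (fun _ => (1:ℝ≥0∞)) := by
            funext t
            by_cases h : t ∈ U ∩ S θ
            · simp only [Set.indicator]
              have : (t, θ) ∈ ZU := by simp [hZU, hZdef]; exact ⟨h.1, h.2⟩
              simp [this, h]
            · simp only [Set.indicator]
              have : (t, θ) ∉ ZU := by
                simp only [hZU, hZdef, Set.mem_inter_iff, Set.mem_setOf_eq]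
                intro hc; exact h ⟨hc.1, hc.2⟩
              simp [this, h]
          rw [this]
          exact (lintegral_indicator_one (hUm.inter (hmeas θ))).symm
        calc ∫⁻ θ, lam (U ∩ S θ) ∂π
            = ∫⁻ θ, ∫⁻ t, ZU.indicator (fun _ => (1:ℝ≥0∞)) (t, θ) ∂lam ∂π := by
              exact lintegral_congr h1
          _ = ∫⁻ t, ∫⁻ θ, ZU.indicator (fun _ => (1:ℝ≥0∞)) (t, θ) ∂π ∂lam :=
              lintegral_lintegral_swap hindm
      have hinner : ∀ t, ∫⁻ θ, ZU.indicator (fun _ => (1:ℝ≥0∞)) (t, θ) ∂π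
          = U.indicator (fun t => π {θ | t ∈ S θ}) t := by
        intro t
        by_cases htU : t ∈ U
        · have : (fun θ => ZU.indicator (fun _ => (1:ℝ≥0∞)) (t, θ))
              = Set.indicator {θ | t ∈ S θ} (fun _ => (1:ℝ≥0∞)) := by
            funext θ
            by_cases h : t ∈ S θ
            · have : (t, θ) ∈ ZU := by simp [hZU, hZdef]; exact ⟨htU, h⟩
              simp [Set.indicator, this, h]
            · have : (t, θ) ∉ ZU := by
                simp only [hZU, hZdef, Set.mem_inter_iff, Set.mem_setOf_eq]
                intro hc; exact h hc.2
              simp [Set.indicator, this, h]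
          rw [this, Set.indicator_of_mem htU]
          exact lintegral_indicator_one (hAm t)
        · have : (fun θ => ZU.indicator (fun _ => (1:ℝ≥0∞)) (t, θ))
              = fun _ => (0:ℝ≥0∞) := by
            funext θ
            have : (t, θ) ∉ ZU := by
              simp only [hZU, hZdef, Set.mem_inter_iff, Set.mem_setOf_eq]
              intro hc; exact htU hc.1
            simp [Set.indicator, this]
          rw [this, lintegral_zero, Set.indicator_of_notMem htU]
      have hRHS : ∫ t in U, alphaFn π S t ∂lam
          = (∫⁻ t in U, π {θ | t ∈ S θ} ∂lam).toReal := by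
        have : ∫ t in U, alphaFn π S t ∂lam
            = ∫ t in U, (π {θ | t ∈ S θ}).toReal ∂lam :=
          integral_congr_ae (Filter.Eventually.of_forall fun t => alphaFn_eq π S hjoint t)
        rw [this]
        exact integral_toReal hπAmeas.aemeasurable
          (Filter.Eventually.of_forall fun t =>
            lt_of_le_of_lt prob_le_one (by norm_num))
      rw [hLHS, hswap, lintegral_congr hinner, lintegral_indicator hUm, hRHS]
    rw [hfub]
  -- apply key formula to both sides
  rw [key T hTm, key Tstar hTstarm]
  -- reduce to set integrals of g = γ - α
  have hαint : ∀ (U : Set ℝ), Integrable (alphaFn π S) (lam.restrict U) := by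
    intro U
    exact (integrable_of_bound_one lam _ hαmeas (fun t => by
      rw [Real.norm_eq_abs, abs_of_nonneg (hα01 t).1]; exact (hα01 t).2)).restrict
  have hUint : ∀ (U : Set ℝ), ∫ t in U, (γ - alphaFn π S t) ∂lam
      = γ * (lam U).toReal - ∫ t in U, alphaFn π S t ∂lam := by
    intro U
    rw [integral_sub (integrable_const _) (hαint U), integral_const]
    simp [Measure.restrict_apply_univ, smul_eq_mul, mul_comm, measureReal_def]
  have hgoal : ∫ t in Tstar, (γ - alphaFn π S t) ∂lam
      ≤ ∫ t in T, (γ - alphaFn π S t) ∂lam := by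
    set g : ℝ → ℝ := fun t => γ - alphaFn π S t with hg
    have hgint : ∀ (U : Set ℝ), IntegrableOn g U lam := by
      intro U
      exact ((integrable_const γ).sub (integrable_of_bound_one lam _ hαmeas (fun t => by
        rw [Real.norm_eq_abs, abs_of_nonneg (hα01 t).1]; exact (hα01 t).2))).restrict
    have h1 : ∫ t in Tstar, g t ∂lam
        = ∫ t in Tstar ∩ T, g t ∂lam + ∫ t in Tstar \ T, g t ∂lam :=
      (integral_inter_add_diff hTm (hgint Tstar)).symm
    have h2 : ∫ t in T, g t ∂lam
        = ∫ t in Tstar ∩ T, g t ∂lam + ∫ t in T \ Tstar, g t ∂lam := by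
      rw [← integral_inter_add_diff hTstarm (hgint T), Set.inter_comm]
    rw [h1, h2]
    apply add_le_add le_rfl
    have hneg : ∫ t in Tstar \ T, g t ∂lam ≤ 0 := by
      apply setIntegral_nonpos (hTstarm.diff hTm)
      intro t ht
      have : γ ≤ alphaFn π S t := ht.1.2
      simp [hg]; linarith
    have hpos : (0:ℝ) ≤ ∫ t in T \ Tstar, g t ∂lam := by
      apply setIntegral_nonneg (hTm.diff hTstarm)
      intro t ht
      have htIcc : t ∈ Set.Icc (0:ℝ) 1 := hTsub ht.1
      have : ¬ γ ≤ alphaFn π S t := by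
        intro hc; exact ht.2 ⟨htIcc, hc⟩
      simp [hg]; linarith
    linarith
  rw [hUint T, hUint Tstar] at hgoal
  linarith
end

section
/- Let T = [0,1] with Lebesgue measure λ, let (Θ, 𝒜, π) be a probability space, let θ ↦ S_θ assign to each θ a measurable subset of [0,1] with (t,θ) ↦ 𝟙{t ∈ S_θ} jointly measurable, let α(t) = ∫_Θ 𝟙{t ∈ S_θ} dπ(θ), and let L_γ(S, S') = γ·λ(S \ S') + (1−γ)·λ(S' \ S) for γ ∈ [0,1]. Then for every measurable S ⊆ [0,1], ∫_Θ L_γ(S, S_θ) dπ(θ) ≥ ∫_0^1 min{γ(1 − α(t)), (1−γ)α(t)} dt. -/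
open MeasureTheory

instance inst_s4 : IsProbabilityMeasure lam := by
  constructor
  simp [lam, Real.volume_Icc]

theorem stmt_4 {Θ : Type*} [MeasurableSpace Θ] (π : Measure Θ) [IsProbabilityMeasure π]
    (S : Θ → Set ℝ) (hsub : ∀ θ, S θ ⊆ Set.Icc 0 1) (hmeas : ∀ θ, MeasurableSet (S θ))
    (hjoint : MeasurableSet {p : ℝ × Θ | p.1 ∈ S p.2})
    (γ : ℝ) (hγ : γ ∈ Set.Icc (0:ℝ) 1) :
    ∀ T : Set ℝ, MeasurableSet T → T ⊆ Set.Icc 0 1 →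
      ∫ t, min (γ * (1 - alphaFn π S t)) ((1 - γ) * alphaFn π S t) ∂lam
        ≤ ∫ θ, Lloss γ T (S θ) ∂π := by
  intro T hT _
  obtain ⟨hγ0, hγ1⟩ := hγ
  set A : ℝ → Set Θ := fun t => {θ | t ∈ S θ} with hA_def
  have hA : ∀ t, MeasurableSet (A t) := fun t =>
    hjoint.preimage (measurable_prodMk_left (x := t))
  have hAle : ∀ t, π (A t) ≤ 1 := fun t => prob_le_one
  have hAm : Measurable fun t => π (A t) := measurable_measure_prodMk_left hjoint
  -- alphaFn in terms of π (A t)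
  have halpha : ∀ t, alphaFn π S t = (π (A t)).toReal := by
    intro t
    have : (fun θ => Set.indicator (S θ) (fun _ => (1:ℝ)) t)
        = (A t).indicator (fun _ => (1:ℝ)) := by
      funext θ
      by_cases h : t ∈ S θ <;> simp [Set.indicator, h, hA_def, A] <;> simp [h]
    rw [alphaFn, this, integral_indicator_const _ (hA t)]
    simp
    rfl
  have halpha01 : ∀ t, 0 ≤ alphaFn π S t ∧ alphaFn π S t ≤ 1 := by
    intro t
    rw [halpha t]
    exact ⟨ENNReal.toReal_nonneg, by
      simpa using ENNReal.toReal_mono (by simp) (hAle t)⟩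
  -- product sets
  set D1 : Set (ℝ × Θ) := (T ×ˢ Set.univ) \ {p : ℝ × Θ | p.1 ∈ S p.2} with hD1_def
  set D2 : Set (ℝ × Θ) := {p : ℝ × Θ | p.1 ∈ S p.2} \ (T ×ˢ Set.univ) with hD2_def
  have hD1 : MeasurableSet D1 := (hT.prod MeasurableSet.univ).diff hjoint
  have hD2 : MeasurableSet D2 := hjoint.diff (hT.prod MeasurableSet.univ)
  have hsec1 : ∀ θ, (fun t => (t, θ)) ⁻¹' D1 = T \ S θ := by
    intro θ; ext t; simp [hD1_def, Set.mem_diff]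
  have hsec2 : ∀ θ, (fun t => (t, θ)) ⁻¹' D2 = S θ \ T := by
    intro θ; ext t; simp [hD2_def, Set.mem_diff]
  have hsec1' : ∀ t, π (Prod.mk t ⁻¹' D1) = T.indicator (fun t => 1 - π (A t)) t := by
    intro t
    by_cases h : t ∈ T
    · have : Prod.mk t ⁻¹' D1 = (A t)ᶜ := by
        ext θ; simp [hD1_def, h, hA_def, A]
      rw [this, Set.indicator_of_mem h, prob_compl_eq_one_sub (hA t)]
    · have : Prod.mk t ⁻¹' D1 = ∅ := by
        ext θ; simp [hD1_def, h]
      rw [this, Set.indicator_of_notMem h]; simp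
  have hsec2' : ∀ t, π (Prod.mk t ⁻¹' D2) = Tᶜ.indicator (fun t => π (A t)) t := by
    intro t
    by_cases h : t ∈ T
    · have : Prod.mk t ⁻¹' D2 = ∅ := by
        ext θ; simp [hD2_def, h]
      rw [this]; simp [Set.indicator, h]
    · have : Prod.mk t ⁻¹' D2 = A t := by
        ext θ; simp [hD2_def, h, hA_def, A]
      rw [this]; simp [Set.indicator, h]
  -- Tonelli for the two product sets
  have key1 : ∫⁻ θ, lam (T \ S θ) ∂π = ∫⁻ t in T, (1 - π (A t)) ∂lam := by
    have h1 : (lam.prod π) D1 = ∫⁻ θ, lam (T \ S θ) ∂π := by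
      rw [Measure.prod_apply_symm hD1]
      exact lintegral_congr fun θ => by rw [hsec1]
    have h2 : (lam.prod π) D1 = ∫⁻ t in T, (1 - π (A t)) ∂lam := by
      rw [Measure.prod_apply hD1]
      rw [← lintegral_indicator hT _]
      exact lintegral_congr fun t => hsec1' t
    rw [← h1, h2]
  have key2 : ∫⁻ θ, lam (S θ \ T) ∂π = ∫⁻ t in Tᶜ, π (A t) ∂lam := by
    have h1 : (lam.prod π) D2 = ∫⁻ θ, lam (S θ \ T) ∂π := by
      rw [Measure.prod_apply_symm hD2]
      exact lintegral_congr fun θ => by rw [hsec2]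
    have h2 : (lam.prod π) D2 = ∫⁻ t in Tᶜ, π (A t) ∂lam := by
      rw [Measure.prod_apply hD2]
      rw [← lintegral_indicator hT.compl _]
      exact lintegral_congr fun t => hsec2' t
    rw [← h1, h2]
  -- measurability in θ
  have hm1 : Measurable fun θ => lam (T \ S θ) := by
    have := measurable_measure_prodMk_right (μ := lam) hD1
    simpa [hsec1] using this
  have hm2 : Measurable fun θ => lam (S θ \ T) := by
    have := measurable_measure_prodMk_right (μ := lam) hD2
    simpa [hsec2] using this
  have hb1 : ∀ θ, lam (T \ S θ) ≤ 1 := fun θ => prob_le_one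
  have hb2 : ∀ θ, lam (S θ \ T) ≤ 1 := fun θ => prob_le_one
  -- integrability of toReal versions
  have hint1 : Integrable (fun θ => (lam (T \ S θ)).toReal) π := by
    refine (integrable_const (1:ℝ)).mono' hm1.ennreal_toReal.aestronglyMeasurable
      (ae_of_all _ fun θ => ?_)
    rw [Real.norm_eq_abs, abs_of_nonneg ENNReal.toReal_nonneg]
    simpa using ENNReal.toReal_mono (by simp) (hb1 θ)
  have hint2 : Integrable (fun θ => (lam (S θ \ T)).toReal) π := by
    refine (integrable_const (1:ℝ)).mono' hm2.ennreal_toReal.aestronglyMeasurable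
      (ae_of_all _ fun θ => ?_)
    rw [Real.norm_eq_abs, abs_of_nonneg ENNReal.toReal_nonneg]
    simpa using ENNReal.toReal_mono (by simp) (hb2 θ)
  -- RHS decomposition
  have hRHS : ∫ θ, Lloss γ T (S θ) ∂π
      = γ * (∫⁻ t in T, (1 - π (A t)) ∂lam).toReal
        + (1 - γ) * (∫⁻ t in Tᶜ, π (A t) ∂lam).toReal := by
    have e1 : ∫ θ, (lam (T \ S θ)).toReal ∂π = (∫⁻ θ, lam (T \ S θ) ∂π).toReal :=
      integral_toReal hm1.aemeasurable
        (ae_of_all _ fun θ => lt_of_le_of_lt (hb1 θ) ENNReal.one_lt_top)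
    have e2 : ∫ θ, (lam (S θ \ T)).toReal ∂π = (∫⁻ θ, lam (S θ \ T) ∂π).toReal :=
      integral_toReal hm2.aemeasurable
        (ae_of_all _ fun θ => lt_of_le_of_lt (hb2 θ) ENNReal.one_lt_top)
    calc ∫ θ, Lloss γ T (S θ) ∂π
        = ∫ θ, (γ * (lam (T \ S θ)).toReal + (1 - γ) * (lam (S θ \ T)).toReal) ∂π := rfl
      _ = γ * ∫ θ, (lam (T \ S θ)).toReal ∂π
          + (1 - γ) * ∫ θ, (lam (S θ \ T)).toReal ∂π := by
          rw [integral_add (hint1.const_mul γ) (hint2.const_mul (1 - γ)),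
            integral_const_mul, integral_const_mul]
      _ = _ := by rw [e1, e2, key1, key2]
  rw [hRHS]
  -- LHS bound
  set g : ℝ → ℝ := fun t => T.indicator (fun t => γ * (1 - alphaFn π S t)) t
      + Tᶜ.indicator (fun t => (1 - γ) * alphaFn π S t) t with hg_def
  have halpham : Measurable (alphaFn π S) := by
    have : (alphaFn π S) = fun t => (π (A t)).toReal := funext halpha
    rw [this]; exact hAm.ennreal_toReal
  have hminle : ∀ t, min (γ * (1 - alphaFn π S t)) ((1 - γ) * alphaFn π S t) ≤ g t := by
    intro t
    by_cases h : t ∈ T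
    · simp only [hg_def, Set.indicator_of_mem h, Set.indicator_of_notMem (by simp [h] :
        t ∉ Tᶜ), add_zero]
      exact min_le_left _ _
    · simp only [hg_def, Set.indicator_of_notMem h, Set.indicator_of_mem (by simp [h] :
        t ∈ Tᶜ), zero_add]
      exact min_le_right _ _
  have hintmin : Integrable (fun t => min (γ * (1 - alphaFn π S t))
      ((1 - γ) * alphaFn π S t)) lam := by
    refine (integrable_const (1:ℝ)).mono'
      (((measurable_const.mul ((measurable_const.sub halpham))).min
        (measurable_const.mul halpham)).aestronglyMeasurable)
      (ae_of_all _ fun t => ?_)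
    obtain ⟨h0, h1⟩ := halpha01 t
    rw [Real.norm_eq_abs, abs_le]
    constructor
    · have : (0:ℝ) ≤ min (γ * (1 - alphaFn π S t)) ((1 - γ) * alphaFn π S t) :=
        le_min (mul_nonneg hγ0 (by linarith)) (mul_nonneg (by linarith) h0)
      linarith
    · calc min (γ * (1 - alphaFn π S t)) ((1 - γ) * alphaFn π S t)
          ≤ γ * (1 - alphaFn π S t) := min_le_left _ _
        _ ≤ 1 := by nlinarith
  have hintg1 : Integrable (fun t => T.indicator (fun t => γ * (1 - alphaFn π S t)) t) lam := by
    refine (integrable_const (1:ℝ)).mono'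
      (((measurable_const.mul (measurable_const.sub halpham)).indicator hT).aestronglyMeasurable)
      (ae_of_all _ fun t => ?_)
    obtain ⟨h0, h1⟩ := halpha01 t
    rw [Real.norm_eq_abs]
    by_cases h : t ∈ T
    · rw [Set.indicator_of_mem h, abs_of_nonneg (mul_nonneg hγ0 (by linarith))]
      nlinarith
    · rw [Set.indicator_of_notMem h]; simp
  have hintg2 : Integrable (fun t => Tᶜ.indicator (fun t => (1 - γ) * alphaFn π S t) t) lam := by
    refine (integrable_const (1:ℝ)).mono'
      (((measurable_const.mul halpham).indicator hT.compl).aestronglyMeasurable)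
      (ae_of_all _ fun t => ?_)
    obtain ⟨h0, h1⟩ := halpha01 t
    rw [Real.norm_eq_abs]
    by_cases h : t ∈ Tᶜ
    · rw [Set.indicator_of_mem h, abs_of_nonneg (mul_nonneg (by linarith) h0)]
      nlinarith
    · rw [Set.indicator_of_notMem h]; simp
  have hle : ∫ t, min (γ * (1 - alphaFn π S t)) ((1 - γ) * alphaFn π S t) ∂lam
      ≤ ∫ t, g t ∂lam :=
    integral_mono hintmin (hintg1.add hintg2) hminle
  refine le_trans hle (le_of_eq ?_)
  -- compute ∫ g
  rw [hg_def]
  rw [integral_add hintg1 hintg2, integral_indicator hT, integral_indicator hT.compl]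
  have c1 : ∫ t in T, γ * (1 - alphaFn π S t) ∂lam
      = γ * (∫⁻ t in T, (1 - π (A t)) ∂lam).toReal := by
    rw [integral_const_mul]
    congr 1
    have : ∀ t, 1 - alphaFn π S t = ((1:ENNReal) - π (A t)).toReal := by
      intro t
      rw [halpha t, ENNReal.toReal_sub_of_le (hAle t) (by simp)]
      simp
    rw [show (fun t => (1:ℝ) - alphaFn π S t) = fun t => ((1:ENNReal) - π (A t)).toReal
      from funext this]
    exact integral_toReal (measurable_const.sub hAm).aemeasurable
      (ae_of_all _ fun t => lt_of_le_of_lt tsub_le_self ENNReal.one_lt_top)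
  have c2 : ∫ t in Tᶜ, (1 - γ) * alphaFn π S t ∂lam
      = (1 - γ) * (∫⁻ t in Tᶜ, π (A t) ∂lam).toReal := by
    rw [integral_const_mul]
    congr 1
    rw [show (alphaFn π S) = fun t => (π (A t)).toReal from funext halpha]
    exact integral_toReal hAm.aemeasurable
      (ae_of_all _ fun t => lt_of_le_of_lt (hAle t) ENNReal.one_lt_top)
  rw [c1, c2]
end

section
/- Let T = [0,1] with Lebesgue measure λ, let (Θ, 𝒜, π) be a probability space, let θ ↦ S_θ assign to each θ a measurable subset of [0,1] with (t,θ) ↦ 𝟙{t ∈ S_θ} jointly measurable, let α(t) = ∫_Θ 𝟙{t ∈ S_θ} dπ(θ), and let L_γ(S, S') = γ·λ(S \ S') + (1−γ)·λ(S' \ S) for γ ∈ [0,1]. Then a measurable set S ⊆ [0,1] satisfies ∫_Θ L_γ(S, S_θ) dπ(θ) = ∫_0^1 min{γ(1 − α(t)), (1−γ)α(t)} dt if and only if for λ-almost every t ∈ [0,1], either α(t) = γ, or (t ∈ S ↔ γ ≤ α(t)). -/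
open MeasureTheory

theorem stmt_5 {Θ : Type*} [MeasurableSpace Θ] (π : Measure Θ) [IsProbabilityMeasure π]
    (S : Θ → Set ℝ) (hsub : ∀ θ, S θ ⊆ Set.Icc 0 1) (hmeas : ∀ θ, MeasurableSet (S θ))
    (hjoint : MeasurableSet {p : ℝ × Θ | p.1 ∈ S p.2})
    (γ : ℝ) (hγ : γ ∈ Set.Icc (0:ℝ) 1)
    (T : Set ℝ) (hT : MeasurableSet T) (hTsub : T ⊆ Set.Icc 0 1) :
    (∫ θ, Lloss γ T (S θ) ∂π
        = ∫ t, min (γ * (1 - alphaFn π S t)) ((1 - γ) * alphaFn π S t) ∂lam)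
      ↔ (∀ᵐ t ∂lam, alphaFn π S t = γ ∨ (t ∈ T ↔ γ ≤ alphaFn π S t)) := by
  obtain ⟨hγ0, hγ1⟩ := hγ
  have hlamuniv : lam Set.univ = 1 := by
    rw [lam, Measure.restrict_apply_univ]; simp [Real.volume_Icc]
  haveI : IsFiniteMeasure lam := ⟨by rw [hlamuniv]; exact ENNReal.one_lt_top⟩
  have hlam_le : ∀ s : Set ℝ, lam s ≤ 1 := fun s => by
    rw [← hlamuniv]; exact measure_mono (Set.subset_univ s)
  set J : Set (ℝ × Θ) := {p : ℝ × Θ | p.1 ∈ S p.2} with hJdef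
  have hJ : MeasurableSet J := hjoint
  set A : ℝ → ℝ := fun t => (π (Prod.mk t ⁻¹' J)).toReal with hAdef
  have hsec : ∀ t, MeasurableSet (Prod.mk t ⁻¹' J) := fun t => measurable_prodMk_left hJ
  have halpha : alphaFn π S = A := by
    funext t
    rw [alphaFn]
    have h1 : ∀ θ, (S θ).indicator (fun _ => (1:ℝ)) t
        = (Prod.mk t ⁻¹' J).indicator (fun _ => (1:ℝ)) θ := by
      intro θ
      by_cases h : t ∈ S θ <;>
        simp [Set.indicator_apply, Set.mem_preimage, Set.mem_setOf_eq, hJdef, h]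
    simp_rw [h1]
    rw [integral_indicator_const (1:ℝ) (hsec t), smul_eq_mul, mul_one]
    rfl
  have hαEmeas : Measurable fun t => π (Prod.mk t ⁻¹' J) :=
    measurable_measure_prodMk_left hJ
  have hAmeas : Measurable A := hαEmeas.ennreal_toReal
  have hαE_le : ∀ t, π (Prod.mk t ⁻¹' J) ≤ 1 := fun t => prob_le_one
  have hA0 : ∀ t, 0 ≤ A t := fun t => ENNReal.toReal_nonneg
  have hA1 : ∀ t, A t ≤ 1 := fun t => by
    have := ENNReal.toReal_mono (by simp) (hαE_le t)
    simpa using this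
  -- the two "bad" sets in the product space
  set W : Set (ℝ × Θ) := (Prod.fst ⁻¹' T) \ J with hWdef
  set W' : Set (ℝ × Θ) := J \ (Prod.fst ⁻¹' T) with hW'def
  have hW : MeasurableSet W := (hT.preimage measurable_fst).diff hJ
  have hW' : MeasurableSet W' := hJ.diff (hT.preimage measurable_fst)
  have hWθ : ∀ θ, (fun t => (t, θ)) ⁻¹' W = T \ S θ := by
    intro θ; ext t; simp [hWdef, hJdef]
  have hW'θ : ∀ θ, (fun t => (t, θ)) ⁻¹' W' = S θ \ T := by
    intro θ; ext t; simp [hW'def, hJdef]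
  have hWt : ∀ t, (π (Prod.mk t ⁻¹' W)).toReal = T.indicator (fun t => 1 - A t) t := by
    intro t
    by_cases ht : t ∈ T
    · have h2 : Prod.mk t ⁻¹' W = (Prod.mk t ⁻¹' J)ᶜ := by
        ext θ; simp [hWdef, ht]
      rw [h2, prob_compl_eq_one_sub (hsec t),
        ENNReal.toReal_sub_of_le (hαE_le t) (by simp), Set.indicator_of_mem ht]
      simp [hAdef]
    · have h2 : Prod.mk t ⁻¹' W = ∅ := by
        ext θ; simp [hWdef, ht]
      rw [h2, Set.indicator_of_notMem ht]; simp
  have hW't : ∀ t, (π (Prod.mk t ⁻¹' W')).toReal = Tᶜ.indicator A t := by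
    intro t
    by_cases ht : t ∈ T
    · have h2 : Prod.mk t ⁻¹' W' = ∅ := by
        ext θ; simp [hW'def, ht]
      rw [h2, Set.indicator_of_notMem (by simp [ht])]; simp
    · have h2 : Prod.mk t ⁻¹' W' = Prod.mk t ⁻¹' J := by
        ext θ; simp [hW'def, ht]
      rw [h2, Set.indicator_of_mem (by simp [ht])]
  -- Fubini for the two pieces
  have fubini : ∀ (V : Set (ℝ × Θ)), MeasurableSet V →
      (∀ θ, lam ((fun t => (t, θ)) ⁻¹' V) ≤ 1) →
      ∫ θ, (lam ((fun t => (t, θ)) ⁻¹' V)).toReal ∂π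
        = ∫ t, (π (Prod.mk t ⁻¹' V)).toReal ∂lam := by
    intro V hV hVb
    rw [integral_toReal (measurable_measure_prodMk_right hV).aemeasurable
      (Filter.Eventually.of_forall fun θ => lt_of_le_of_lt (hVb θ) ENNReal.one_lt_top),
      integral_toReal (measurable_measure_prodMk_left hV).aemeasurable
      (Filter.Eventually.of_forall fun t => measure_lt_top π _),
      ← Measure.prod_apply_symm hV, Measure.prod_apply hV]
  have e1 : ∫ θ, (lam (T \ S θ)).toReal ∂π = ∫ t, T.indicator (fun t => 1 - A t) t ∂lam := by
    have := fubini W hW (fun θ => by rw [hWθ]; exact hlam_le _)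
    simp_rw [hWθ, hWt] at this
    exact this
  have e2 : ∫ θ, (lam (S θ \ T)).toReal ∂π = ∫ t, Tᶜ.indicator A t ∂lam := by
    have := fubini W' hW' (fun θ => by rw [hW'θ]; exact hlam_le _)
    simp_rw [hW'θ, hW't] at this
    exact this
  -- integrability of bounded measurable real functions
  have bdd_int : ∀ (μ : Measure ℝ) [IsFiniteMeasure μ] (f : ℝ → ℝ), Measurable f →
      (∀ t, |f t| ≤ 1) → Integrable f μ := by
    intro μ _ f hf hb
    exact (integrable_const (1:ℝ)).mono' hf.aestronglyMeasurable
      (Filter.Eventually.of_forall fun t => by simpa [Real.norm_eq_abs] using hb t)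
  have hind1meas : Measurable fun t => T.indicator (fun t => 1 - A t) t :=
    (measurable_const.sub hAmeas).indicator hT
  have hind2meas : Measurable fun t => Tᶜ.indicator A t := hAmeas.indicator hT.compl
  have hind1b : ∀ t, |T.indicator (fun t => 1 - A t) t| ≤ 1 := by
    intro t; by_cases ht : t ∈ T
    · rw [Set.indicator_of_mem ht]; rw [abs_le]; constructor <;> [linarith [hA1 t]; linarith [hA0 t]]
    · rw [Set.indicator_of_notMem ht]; simp
  have hind2b : ∀ t, |Tᶜ.indicator A t| ≤ 1 := by
    intro t; by_cases ht : t ∈ Tᶜ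
    · rw [Set.indicator_of_mem ht]; rw [abs_le]; constructor <;> [linarith [hA0 t]; exact hA1 t]
    · rw [Set.indicator_of_notMem ht]; simp
  have hi1 : Integrable (fun t => T.indicator (fun t => 1 - A t) t) lam :=
    bdd_int lam _ hind1meas hind1b
  have hi2 : Integrable (fun t => Tᶜ.indicator A t) lam := bdd_int lam _ hind2meas hind2b
  set g : ℝ → ℝ :=
    fun t => γ * T.indicator (fun t => 1 - A t) t + (1 - γ) * Tᶜ.indicator A t with hgdef
  set m : ℝ → ℝ := fun t => min (γ * (1 - A t)) ((1 - γ) * A t) with hmdef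
  have hgi : Integrable g lam := ((hi1.const_mul γ).add (hi2.const_mul (1 - γ)))
  have hmmeas : Measurable m :=
    (measurable_const.mul (measurable_const.sub hAmeas)).min (measurable_const.mul hAmeas)
  have hmi : Integrable m lam := by
    apply bdd_int lam m hmmeas
    intro t
    rw [abs_le]
    constructor
    · have h1 : 0 ≤ (1 - γ) * A t := mul_nonneg (by linarith) (hA0 t)
      have h2 : (-1 : ℝ) ≤ (1 - γ) * A t := by linarith
      exact le_min (by nlinarith [hA1 t]) h2
    · exact le_trans (min_le_right _ _) (by nlinarith [hA1 t])
  -- LHS equals ∫ g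
  have hLHS : ∫ θ, Lloss γ T (S θ) ∂π = ∫ t, g t ∂lam := by
    have hf1 : Integrable (fun θ => (lam (T \ S θ)).toReal) π := by
      refine (integrable_const (1:ℝ)).mono'
        ?_ (Filter.Eventually.of_forall fun θ => ?_)
      · have h := measurable_measure_prodMk_right (μ := lam) hW
        simp_rw [hWθ] at h
        exact h.ennreal_toReal.aestronglyMeasurable
      · rw [Real.norm_eq_abs, abs_of_nonneg ENNReal.toReal_nonneg]
        have := ENNReal.toReal_mono ENNReal.one_ne_top (hlam_le (T \ S θ))
        simpa using this
    have hf2 : Integrable (fun θ => (lam (S θ \ T)).toReal) π := by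
      refine (integrable_const (1:ℝ)).mono'
        ?_ (Filter.Eventually.of_forall fun θ => ?_)
      · have h := measurable_measure_prodMk_right (μ := lam) hW'
        simp_rw [hW'θ] at h
        exact h.ennreal_toReal.aestronglyMeasurable
      · rw [Real.norm_eq_abs, abs_of_nonneg ENNReal.toReal_nonneg]
        have := ENNReal.toReal_mono ENNReal.one_ne_top (hlam_le (S θ \ T))
        simpa using this
    have step1 : ∫ θ, Lloss γ T (S θ) ∂π
        = γ * ∫ θ, (lam (T \ S θ)).toReal ∂π + (1 - γ) * ∫ θ, (lam (S θ \ T)).toReal ∂π := by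
      rw [show (fun θ => Lloss γ T (S θ))
          = fun θ => γ * (lam (T \ S θ)).toReal + (1 - γ) * (lam (S θ \ T)).toReal from rfl,
        integral_add (hf1.const_mul γ) (hf2.const_mul (1 - γ)),
        integral_const_mul, integral_const_mul]
    rw [step1, e1, e2, hgdef]
    rw [integral_add (hi1.const_mul γ) (hi2.const_mul (1 - γ)),
      integral_const_mul, integral_const_mul]
  -- pointwise inequality and equality characterization
  have hgm : ∀ t, m t ≤ g t := by
    intro t
    by_cases ht : t ∈ T
    · rw [hgdef]
      simp only [Set.indicator_of_mem ht, Set.indicator_of_notMem (by simp [ht] : t ∉ Tᶜ),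
        mul_zero, add_zero]
      exact min_le_left _ _
    · rw [hgdef]
      simp only [Set.indicator_of_notMem ht, Set.indicator_of_mem (by simp [ht] : t ∈ Tᶜ),
        mul_zero, zero_add]
      exact min_le_right _ _
  have hkey : ∀ t, (g t = m t ↔ (A t = γ ∨ (t ∈ T ↔ γ ≤ A t))) := by
    intro t
    by_cases ht : t ∈ T
    · rw [hgdef, hmdef]
      simp only [Set.indicator_of_mem ht, Set.indicator_of_notMem (by simp [ht] : t ∉ Tᶜ),
        mul_zero, add_zero]
      constructor
      · intro h
        right
        refine ⟨fun _ => ?_, fun _ => ht⟩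
        by_contra hc
        push_neg at hc
        have hmin : min (γ * (1 - A t)) ((1 - γ) * A t) = (1 - γ) * A t :=
          min_eq_right (by nlinarith)
        rw [hmin] at h
        nlinarith
      · intro h
        have hle : γ ≤ A t := by
          rcases h with h | h
          · exact le_of_eq h.symm
          · exact h.mp ht
        have : γ * (1 - A t) ≤ (1 - γ) * A t := by nlinarith
        exact (min_eq_left this).symm
    · rw [hgdef, hmdef]
      simp only [Set.indicator_of_notMem ht, Set.indicator_of_mem (by simp [ht] : t ∈ Tᶜ),
        mul_zero, zero_add]
      constructor
      · intro h
        have hle : A t ≤ γ := by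
          by_contra hc
          push_neg at hc
          have hmin : min (γ * (1 - A t)) ((1 - γ) * A t) = γ * (1 - A t) :=
            min_eq_left (by nlinarith)
          rw [hmin] at h
          nlinarith
        rcases lt_or_eq_of_le hle with h3 | h3
        · exact Or.inr ⟨fun h4 => absurd h4 ht, fun h4 => absurd (lt_of_lt_of_le h3 h4) (lt_irrefl _)⟩
        · exact Or.inl h3
      · intro h
        have hle : A t ≤ γ := by
          rcases h with h | h
          · exact le_of_eq h
          · by_contra hc
            push_neg at hc
            exact ht (h.mpr hc.le)
        have : (1 - γ) * A t ≤ γ * (1 - A t) := by nlinarith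
        exact (min_eq_right this).symm
  -- integral equality iff a.e. equality
  have hiff : (∫ t, g t ∂lam = ∫ t, m t ∂lam) ↔ g =ᵐ[lam] m := by
    constructor
    · intro h
      have hz : ∫ t, (g t - m t) ∂lam = 0 := by
        rw [integral_sub hgi hmi, h, sub_self]
      have := (integral_eq_zero_iff_of_nonneg (fun t => sub_nonneg.2 (hgm t)) (hgi.sub hmi)).mp hz
      filter_upwards [this] with t ht
      have : g t - m t = 0 := ht
      linarith
    · intro h
      exact integral_congr_ae h
  rw [halpha]
  calc (∫ θ, Lloss γ T (S θ) ∂π = ∫ t, min (γ * (1 - A t)) ((1 - γ) * A t) ∂lam)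
      ↔ (∫ t, g t ∂lam = ∫ t, m t ∂lam) := by rw [hLHS]
    _ ↔ g =ᵐ[lam] m := hiff
    _ ↔ (∀ᵐ t ∂lam, A t = γ ∨ (t ∈ T ↔ γ ≤ A t)) :=
        Filter.eventually_congr (Filter.Eventually.of_forall hkey)
end
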